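/- Define χ_n(2) = (n-1)! ∑_{k=0}^{n+2} ((-1)^{k-1} B_k B_{n+2-k})/(k!(n+2-k)!) 2^{k-n/2-1}. Then for g ≥ 1: χ_{2g-1}(2) = √2 · 2^{-g} · (2^{2g-2} - 1/2) B_{2g} / (2g(2g-1)), and χ_{2g-2}(2) = 2^{-g} · χ_{2g-2}(1) (where for g=1 one interprets χ_0(β) = -1/4 + β^{-1}/12 + β/12). -/

import Mathlib

open PowerSeries Finset

private lemma myDerivExp : d⁄dX ℚ (exp ℚ) = exp ℚ := by
  ext n
  rw [coeff_derivative, coeff_exp, coeff_exp]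
  simp only [Algebra.algebraMap_self, RingHom.id_apply]
  rw [Nat.factorial_succ]
  have h1 : ((n : ℚ) + 1) ≠ 0 := by positivity
  have h2 : ((n.factorial : ℚ)) ≠ 0 := by positivity
  push_cast
  field_simp

private lemma coeff_exp' (n : ℕ) : coeff n (exp ℚ) = 1 / n.factorial := by
  rw [coeff_exp]; simp [Algebra.algebraMap_self]

private lemma coeff_bps (n : ℕ) :
    coeff n (bernoulliPowerSeries ℚ) = bernoulli n / n.factorial := by
  rw [bernoulliPowerSeries, coeff_mk]; simp [Algebra.algebraMap_self]

private lemma convSum (c : ℚ) (N : ℕ) :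
    coeff N (rescale c (bernoulliPowerSeries ℚ) * bernoulliPowerSeries ℚ)
      = ∑ k ∈ range (N + 1),
          c ^ k * (bernoulli k / k.factorial) * (bernoulli (N - k) / (N - k).factorial) := by
  rw [coeff_mul, Finset.Nat.sum_antidiagonal_eq_sum_range_succ_mk]
  refine Finset.sum_congr rfl fun k _ => ?_
  rw [coeff_rescale, coeff_bps, coeff_bps]

private lemma hE1ne : (exp ℚ - 1 : ℚ⟦X⟧) ≠ 0 := by
  intro h
  have := congrArg (coeff 1) h
  simp [coeff_exp', coeff_one] at this

private lemma hU1ne : (rescale (-1 : ℚ) (exp ℚ) - 1 : ℚ⟦X⟧) ≠ 0 := by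
  intro h
  have := congrArg (coeff 1) h
  rw [map_sub, coeff_rescale, coeff_exp', coeff_one] at this
  norm_num at this

private lemma hU2ne : (rescale (-1 : ℚ) (exp ℚ) + 1 : ℚ⟦X⟧) ≠ 0 := by
  intro h
  have := congrArg (coeff 0) h
  rw [map_add, coeff_rescale, coeff_exp', coeff_zero_one] at this
  norm_num at this

private lemma keyQ (A E U R1 dA Y : ℚ⟦X⟧) (h1 : A * (E - 1) = Y)
    (h2 : R1 * (U - 1) = -Y) (h4 : dA * (E - 1) + A * E = 1) (h5 : E * U = 1)
    (hE1 : E - 1 ≠ 0) (hU1 : U - 1 ≠ 0) :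
    R1 * A = A - Y * dA := by
  have key : (R1 * A) * ((E - 1) ^ 2 * (U - 1)) = (A - Y * dA) * ((E - 1) ^ 2 * (U - 1)) := by
    linear_combination (A * (E - 1) ^ 2) * h2
      + (-(Y * (E - 1)) - (E - 1) * (U - 1) - Y * E * (U - 1)) * h1
      + (Y * (E - 1) * (U - 1)) * h4 + (-(Y ^ 2)) * h5
  exact mul_right_cancel₀ (mul_ne_zero (pow_ne_zero _ hE1) hU1) key

private lemma keyP (A E U R1 R2 dA Y : ℚ⟦X⟧) (h1 : A * (E - 1) = Y)
    (h2 : R1 * (U - 1) = -Y) (h3 : R2 * (U ^ 2 - 1) = -(2 * Y))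
    (h4 : dA * (E - 1) + A * E = 1) (h5 : E * U = 1)
    (hE1 : E - 1 ≠ 0) (hU1 : U - 1 ≠ 0) (hU2 : U + 1 ≠ 0) :
    2 * (R2 * A) = 2 * A - 2 * (Y * dA) - Y * R2 + 2 * (Y * R1) := by
  have hW2ne : ((E - 1) ^ 2 * (U ^ 2 - 1) * (U - 1) : ℚ⟦X⟧) ≠ 0 := by
    have hfac : (U ^ 2 - 1 : ℚ⟦X⟧) = (U - 1) * (U + 1) := by ring
    rw [hfac]
    exact mul_ne_zero (mul_ne_zero (pow_ne_zero _ hE1) (mul_ne_zero hU1 hU2)) hU1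
  have key : (2 * (R2 * A)) * ((E - 1) ^ 2 * (U ^ 2 - 1) * (U - 1))
      = (2 * A - 2 * (Y * dA) - Y * R2 + 2 * (Y * R1)) * ((E - 1) ^ 2 * (U ^ 2 - 1) * (U - 1)) := by
    linear_combination (2 * A * (E - 1) ^ 2 * (U - 1) + Y * (E - 1) ^ 2 * (U - 1)) * h3
      + (-(4 * Y * (E - 1) * (U - 1)) - 2 * ((E - 1) * (U - 1) + Y * E * (U - 1)) * (U ^ 2 - 1)) * h1
      + (2 * Y * (E - 1) * (U - 1) * (U ^ 2 - 1)) * h4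
      + (-(2 * Y ^ 2 * (U ^ 2 - 1)) + 2 * Y ^ 2 * (E - 1) * (U - 1)) * h5
      + (-(2 * Y * (E - 1) ^ 2 * (U ^ 2 - 1))) * h2
  exact mul_right_cancel₀ hW2ne key

-- instantiation facts
private lemma f1 : bernoulliPowerSeries ℚ * (exp ℚ - 1) = X :=
  bernoulliPowerSeries_mul_exp_sub_one ℚ

private lemma f5 : exp ℚ * rescale (-1 : ℚ) (exp ℚ) = 1 :=
  exp_mul_exp_neg_eq_one (A := ℚ)

private lemma f2 : rescale (-1 : ℚ) (bernoulliPowerSeries ℚ) * (rescale (-1 : ℚ) (exp ℚ) - 1)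
    = -X := by
  have h := congrArg (rescale (-1 : ℚ)) f1
  rw [map_mul, map_sub, map_one, rescale_neg_one_X] at h
  exact h

private lemma hsqU : (rescale (-1 : ℚ) (exp ℚ)) ^ 2 = rescale (-2 : ℚ) (exp ℚ) := by
  rw [pow_two, exp_mul_exp_eq_exp_add]
  norm_num

private lemma f3 : rescale (-2 : ℚ) (bernoulliPowerSeries ℚ)
    * ((rescale (-1 : ℚ) (exp ℚ)) ^ 2 - 1) = -(2 * X) := by
  have h := congrArg (rescale (-2 : ℚ)) f1
  rw [map_mul, map_sub, map_one, rescale_X] at h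
  rw [hsqU, h]
  simp only [map_neg, map_ofNat]
  ring

private lemma f4 : d⁄dX ℚ (bernoulliPowerSeries ℚ) * (exp ℚ - 1)
    + bernoulliPowerSeries ℚ * exp ℚ = 1 := by
  have h := congrArg (d⁄dX ℚ) f1
  rw [Derivation.leibniz, map_sub, myDerivExp, Derivation.map_one_eq_zero,
    derivative_X, smul_eq_mul, smul_eq_mul] at h
  linear_combination h

private lemma keysQ : rescale (-1 : ℚ) (bernoulliPowerSeries ℚ) * bernoulliPowerSeries ℚ
    = bernoulliPowerSeries ℚ - X * d⁄dX ℚ (bernoulliPowerSeries ℚ) :=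
  keyQ _ _ _ _ _ _ f1 f2 f4 f5 hE1ne hU1ne

private lemma keysP : 2 * (rescale (-2 : ℚ) (bernoulliPowerSeries ℚ) * bernoulliPowerSeries ℚ)
    = 2 * bernoulliPowerSeries ℚ - 2 * (X * d⁄dX ℚ (bernoulliPowerSeries ℚ))
      - X * rescale (-2 : ℚ) (bernoulliPowerSeries ℚ)
      + 2 * (X * rescale (-1 : ℚ) (bernoulliPowerSeries ℚ)) :=
  keyP _ _ _ _ _ _ _ f1 f2 f3 f4 f5 hE1ne hU1ne hU2ne

private lemma L1 (n : ℕ) :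
    ∑ k ∈ range (n + 2),
        (-1 : ℚ) ^ k * (bernoulli k / k.factorial) * (bernoulli (n + 1 - k) / (n + 1 - k).factorial)
      = bernoulli (n + 1) / (n + 1).factorial
        - bernoulli (n + 1) / (n + 1).factorial * ((n : ℚ) + 1) := by
  have h := congrArg (coeff (n + 1)) keysQ
  simp only [map_sub, convSum, coeff_succ_X_mul, coeff_derivative, coeff_bps,
    show n + 1 + 1 = n + 2 from rfl] at h
  rw [h]

private lemma L2 (n : ℕ) :
    2 * ∑ k ∈ range (n + 2),
        (-2 : ℚ) ^ k * (bernoulli k / k.factorial) * (bernoulli (n + 1 - k) / (n + 1 - k).factorial)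
      = 2 * (bernoulli (n + 1) / (n + 1).factorial)
        - 2 * (bernoulli (n + 1) / (n + 1).factorial * ((n : ℚ) + 1))
        - (-2 : ℚ) ^ n * (bernoulli n / n.factorial)
        + 2 * ((-1 : ℚ) ^ n * (bernoulli n / n.factorial)) := by
  have h := congrArg (coeff (n + 1)) keysP
  rw [show (2 : ℚ⟦X⟧) * (rescale (-2 : ℚ) (bernoulliPowerSeries ℚ) * bernoulliPowerSeries ℚ)
      = rescale (-2 : ℚ) (bernoulliPowerSeries ℚ) * bernoulliPowerSeries ℚ
        + rescale (-2 : ℚ) (bernoulliPowerSeries ℚ) * bernoulliPowerSeries ℚ from by ring,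
    show (2 : ℚ⟦X⟧) * bernoulliPowerSeries ℚ - 2 * (X * d⁄dX ℚ (bernoulliPowerSeries ℚ))
        - X * rescale (-2 : ℚ) (bernoulliPowerSeries ℚ)
        + 2 * (X * rescale (-1 : ℚ) (bernoulliPowerSeries ℚ))
      = (bernoulliPowerSeries ℚ + bernoulliPowerSeries ℚ
          - (X * d⁄dX ℚ (bernoulliPowerSeries ℚ) + X * d⁄dX ℚ (bernoulliPowerSeries ℚ))
          - X * rescale (-2 : ℚ) (bernoulliPowerSeries ℚ))
        + (X * rescale (-1 : ℚ) (bernoulliPowerSeries ℚ)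
            + X * rescale (-1 : ℚ) (bernoulliPowerSeries ℚ)) from by ring] at h
  simp only [map_add, map_sub, convSum, coeff_succ_X_mul, coeff_derivative, coeff_rescale,
    coeff_bps, show n + 1 + 1 = n + 2 from rfl] at h
  rw [two_mul, h]
  ring

private lemma bOdd (m : ℕ) : bernoulli (2 * m + 3) = 0 := by
  rw [bernoulli_eq_bernoulli'_of_ne_one (by omega)]
  exact bernoulli'_eq_zero_of_odd ⟨m + 1, by ring⟩ (by omega)

private lemma sumP_odd (j : ℕ) :
    ∑ k ∈ range (2 * j + 4),
        (-2 : ℚ) ^ k * (bernoulli k / k.factorial)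
          * (bernoulli (2 * j + 3 - k) / (2 * j + 3 - k).factorial)
      = (1 - 2 ^ (2 * j + 1)) * (bernoulli (2 * j + 2) / (2 * j + 2).factorial) := by
  have h := L2 (2 * j + 2)
  simp only [show 2 * j + 2 + 1 = 2 * j + 3 from rfl, show 2 * j + 2 + 2 = 2 * j + 4 from rfl,
    bOdd j] at h
  rw [show (-2 : ℚ) ^ (2 * j + 2) = 2 ^ (2 * j + 2) from by
        rw [show 2 * j + 2 = 2 * (j + 1) by ring, pow_mul, pow_mul]; norm_num,
      show (-1 : ℚ) ^ (2 * j + 2) = 1 from by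
        rw [show 2 * j + 2 = 2 * (j + 1) by ring, pow_mul]; norm_num] at h
  linear_combination h / 2

private lemma sumPQ_even (i : ℕ) :
    ∑ k ∈ range (2 * i + 5),
        (-2 : ℚ) ^ k * (bernoulli k / k.factorial)
          * (bernoulli (2 * i + 4 - k) / (2 * i + 4 - k).factorial)
      = ∑ k ∈ range (2 * i + 5),
          (-1 : ℚ) ^ k * (bernoulli k / k.factorial)
            * (bernoulli (2 * i + 4 - k) / (2 * i + 4 - k).factorial) := by
  have h2 := L2 (2 * i + 3)
  have h1 := L1 (2 * i + 3)
  simp only [show 2 * i + 3 + 1 = 2 * i + 4 from rfl, show 2 * i + 3 + 2 = 2 * i + 5 from rfl] at h1 h2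
  rw [bOdd i] at h2
  linear_combination h2 / 2 - h1

/-- The parameterized Euler characters: `χ_0(β) = -1/4 + 1/(12β) + β/12`, and for `n ≥ 1`
`χ_n(β) = (n-1)! ∑_{k=0}^{n+2} ((-1)^{k-1} B_k B_{n+2-k})/(k!(n+2-k)!) β^{k-n/2-1}`. -/
noncomputable def parEuler (B : ℕ → ℚ) (β : ℝ) : ℕ → ℝ
  | 0 => -1 / 4 + 1 / (12 * β) + β / 12
  | n + 1 =>
      (n.factorial : ℝ) *
        ∑ k ∈ Finset.range (n + 4),
          (-1 : ℝ) ^ ((k : ℤ) - 1) * (B k : ℝ) * (B (n + 3 - k) : ℝ)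
            / ((k.factorial : ℝ) * ((n + 3 - k).factorial : ℝ))
            * β ^ ((k : ℝ) - ((n : ℝ) + 1) / 2 - 1)

private lemma parEuler_zero (B : ℕ → ℚ) (β : ℝ) :
    parEuler B β 0 = -1 / 4 + 1 / (12 * β) + β / 12 := rfl

private lemma parEuler_succ (B : ℕ → ℚ) (β : ℝ) (n : ℕ) :
    parEuler B β (n + 1) =
      (n.factorial : ℝ) *
        ∑ k ∈ Finset.range (n + 4),
          (-1 : ℝ) ^ ((k : ℤ) - 1) * (B k : ℝ) * (B (n + 3 - k) : ℝ)
            / ((k.factorial : ℝ) * ((n + 3 - k).factorial : ℝ))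
            * β ^ ((k : ℝ) - ((n : ℝ) + 1) / 2 - 1) := rfl

private lemma hnegpow (k : ℕ) : (-1 : ℝ) ^ ((k : ℤ) - 1) = -(-1 : ℝ) ^ k := by
  rw [sub_eq_add_neg, zpow_add₀ (by norm_num : (-1 : ℝ) ≠ 0), zpow_natCast]
  norm_num

private lemma negtwopow (k : ℕ) : ((-2 : ℝ)) ^ k = (-1 : ℝ) ^ k * 2 ^ k := by
  rw [show (-2 : ℝ) = -1 * 2 by norm_num, mul_pow]

/-- At `β = 2`, for `g ≥ 1`:
`χ_{2g-1}(2) = √2 · 2^{-g} (2^{2g-2} - 1/2) B_{2g}/(2g(2g-1))` and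
`χ_{2g-2}(2) = 2^{-g} χ_{2g-2}(1)`, with Bernoulli numbers in the convention
`s/(1-e^s) = -∑ B_m s^m/m!`. -/
theorem parEuler_beta_two (B : ℕ → ℚ)
    (hB : (PowerSeries.mk fun m => -(B m / (m.factorial : ℚ))) *
        (1 - PowerSeries.exp ℚ) = PowerSeries.X) :
    ∀ g : ℕ, 1 ≤ g →
      parEuler B 2 (2 * g - 1)
          = Real.sqrt 2 * (2 : ℝ) ^ (-(g : ℤ)) * ((2 : ℝ) ^ (2 * g - 2) - 1 / 2)
            * (B (2 * g) : ℝ) / ((2 * g : ℝ) * ((2 * g : ℝ) - 1))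
      ∧ parEuler B 2 (2 * g - 2) = (2 : ℝ) ^ (-(g : ℤ)) * parEuler B 1 (2 * g - 2) := by
  -- identify B with the Bernoulli numbers
  have hmk : (PowerSeries.mk fun m => -(B m / (m.factorial : ℚ)))
      = -(PowerSeries.mk fun m => (B m / (m.factorial : ℚ))) := by
    ext n; simp [PowerSeries.coeff_mk]
  rw [hmk] at hB
  have h0 : (PowerSeries.mk fun m => (B m / (m.factorial : ℚ))) * (exp ℚ - 1) = X := by
    linear_combination hB
  have hcan : PowerSeries.mk (fun m => (B m / (m.factorial : ℚ))) = bernoulliPowerSeries ℚ :=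
    mul_right_cancel₀ hE1ne (h0.trans (bernoulliPowerSeries_mul_exp_sub_one ℚ).symm)
  have hBb : ∀ m, B m = bernoulli m := by
    intro m
    have h := congrArg (PowerSeries.coeff m) hcan
    rw [PowerSeries.coeff_mk, coeff_bps] at h
    have hc : ((m.factorial : ℚ)) ≠ 0 := Nat.cast_ne_zero.mpr m.factorial_ne_zero
    field_simp at h
    exact h
  rintro g hg
  obtain ⟨j, rfl⟩ : ∃ j, g = j + 1 := ⟨g - 1, by omega⟩
  constructor
  · -- odd part
    rw [show 2 * (j + 1) - 1 = (2 * j) + 1 by omega, parEuler_succ]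
    have hsum : ∑ k ∈ Finset.range (2 * j + 4),
        (-1 : ℝ) ^ ((k : ℤ) - 1) * (B k : ℝ) * (B (2 * j + 3 - k) : ℝ)
          / ((k.factorial : ℝ) * ((2 * j + 3 - k).factorial : ℝ))
          * (2 : ℝ) ^ ((k : ℝ) - (((2 * j : ℕ) : ℝ) + 1) / 2 - 1)
        = (-(Real.sqrt 2 * (2 : ℝ) ^ (-(j : ℤ) - 2))) *
            ((((1 : ℚ) - 2 ^ (2 * j + 1)) * (bernoulli (2 * j + 2) / (2 * j + 2).factorial) : ℚ) : ℝ) := by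
      rw [show ∑ k ∈ Finset.range (2 * j + 4),
          (-1 : ℝ) ^ ((k : ℤ) - 1) * (B k : ℝ) * (B (2 * j + 3 - k) : ℝ)
            / ((k.factorial : ℝ) * ((2 * j + 3 - k).factorial : ℝ))
            * (2 : ℝ) ^ ((k : ℝ) - (((2 * j : ℕ) : ℝ) + 1) / 2 - 1)
          = ∑ k ∈ Finset.range (2 * j + 4), (-(Real.sqrt 2 * (2 : ℝ) ^ (-(j : ℤ) - 2))) *
              ((((-2 : ℚ) ^ k * (bernoulli k / k.factorial)
                * (bernoulli (2 * j + 3 - k) / (2 * j + 3 - k).factorial)) : ℚ) : ℝ) from ?_,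
        ← Finset.mul_sum, ← Rat.cast_sum, sumP_odd j]
      refine Finset.sum_congr rfl fun k _ => ?_
      have hpow : (2 : ℝ) ^ ((k : ℝ) - (((2 * j : ℕ) : ℝ) + 1) / 2 - 1)
          = (2 : ℝ) ^ (k : ℤ) * ((2 : ℝ) ^ (-(j : ℤ) - 2) * Real.sqrt 2) := by
        rw [Real.sqrt_eq_rpow, ← Real.rpow_intCast 2 (k : ℤ), ← Real.rpow_intCast 2 (-(j : ℤ) - 2),
          ← Real.rpow_add (by norm_num : (0:ℝ) < 2), ← Real.rpow_add (by norm_num : (0:ℝ) < 2)]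
        congr 1
        push_cast
        ring
      rw [hnegpow, hpow, hBb, hBb, zpow_natCast]
      push_cast [negtwopow]
      ring
    rw [hsum, hBb]
    rw [show 2 * (j + 1) - 2 = 2 * j by omega, show 2 * (j + 1) = 2 * j + 2 by ring]
    have z1 : (2 : ℝ) ^ (-(j : ℤ) - 2) = ((2 : ℝ) ^ (j + 2 : ℕ))⁻¹ := by
      rw [show -(j : ℤ) - 2 = -((j + 2 : ℕ) : ℤ) by push_cast; ring, zpow_neg, zpow_natCast]
    have z2 : (2 : ℝ) ^ (-((j + 1 : ℕ) : ℤ)) = ((2 : ℝ) ^ (j + 1 : ℕ))⁻¹ := by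
      rw [zpow_neg, zpow_natCast]
    have hf : (((2 * j + 2).factorial : ℝ)) = ((2 * j + 2 : ℕ) : ℝ) * ((2 * j + 1 : ℕ) : ℝ)
        * ((2 * j).factorial : ℝ) := by
      rw [show 2 * j + 2 = (2 * j + 1) + 1 by ring, Nat.factorial_succ, Nat.factorial_succ]
      push_cast
      ring
    rw [z1, z2]
    push_cast [hf]
    rw [show (2:ℝ)^(j+2) = 4 * 2^j from by rw [pow_add]; ring,
        show (2:ℝ)^(j+1) = 2 * 2^j from by rw [pow_add]; ring,
        show (2:ℝ)^(2*j) = 2^j * 2^j from by rw [two_mul, pow_add],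
        show (2:ℝ)^(2*j+1) = 2 * (2^j * 2^j) from by rw [pow_add, two_mul, pow_add]; ring]
    have hfne : ((2 * j).factorial : ℝ) ≠ 0 := by positivity
    have hPne : ((2:ℝ)^j) ≠ 0 := by positivity
    have hden1 : ((2 : ℝ) * j + 2) ≠ 0 := by positivity
    have hden2 : ((2 : ℝ) * j + 1) ≠ 0 := by positivity
    have hd1 : (2:ℝ) * ((j:ℝ) + 1) ≠ 0 := by positivity
    have hj0 : (0:ℝ) ≤ (j:ℝ) := Nat.cast_nonneg j
    have hd2 : (2:ℝ) * ((j:ℝ) + 1) - 1 ≠ 0 := by nlinarith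
    field_simp
    ring
  · -- even part
    cases j with
    | zero =>
      rw [show 2 * (0 + 1) - 2 = 0 by omega, parEuler_zero, parEuler_zero]
      norm_num
    | succ i =>
      rw [show 2 * (i + 1 + 1) - 2 = (2 * i + 1) + 1 by omega, parEuler_succ, parEuler_succ]
      have hsum2 : ∑ k ∈ Finset.range (2 * i + 1 + 4),
          (-1 : ℝ) ^ ((k : ℤ) - 1) * (B k : ℝ) * (B (2 * i + 1 + 3 - k) : ℝ)
            / ((k.factorial : ℝ) * ((2 * i + 1 + 3 - k).factorial : ℝ))
            * (2 : ℝ) ^ ((k : ℝ) - (((2 * i + 1 : ℕ) : ℝ) + 1) / 2 - 1)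
          = (-(2 : ℝ) ^ (-(i : ℤ) - 2)) *
              ((∑ k ∈ Finset.range (2 * i + 5), ((-2 : ℚ) ^ k * (bernoulli k / k.factorial)
                * (bernoulli (2 * i + 4 - k) / (2 * i + 4 - k).factorial)) : ℚ) : ℝ) := by
        rw [Rat.cast_sum, Finset.mul_sum, show 2 * i + 1 + 4 = 2 * i + 5 from rfl]
        refine Finset.sum_congr rfl fun k _ => ?_
        have hpow : (2 : ℝ) ^ ((k : ℝ) - (((2 * i + 1 : ℕ) : ℝ) + 1) / 2 - 1)
            = (2 : ℝ) ^ (k : ℤ) * (2 : ℝ) ^ (-(i : ℤ) - 2) := by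
          rw [← Real.rpow_intCast 2 (k : ℤ), ← Real.rpow_intCast 2 (-(i : ℤ) - 2),
            ← Real.rpow_add (by norm_num : (0:ℝ) < 2)]
          congr 1
          push_cast
          ring
        rw [hnegpow, hpow, hBb, hBb, zpow_natCast,
          show 2 * i + 1 + 3 - k = 2 * i + 4 - k by omega]
        push_cast [negtwopow]
        ring
      have hsum1 : ∑ k ∈ Finset.range (2 * i + 1 + 4),
          (-1 : ℝ) ^ ((k : ℤ) - 1) * (B k : ℝ) * (B (2 * i + 1 + 3 - k) : ℝ)
            / ((k.factorial : ℝ) * ((2 * i + 1 + 3 - k).factorial : ℝ))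
            * (1 : ℝ) ^ ((k : ℝ) - (((2 * i + 1 : ℕ) : ℝ) + 1) / 2 - 1)
          = (-1 : ℝ) *
              ((∑ k ∈ Finset.range (2 * i + 5), ((-1 : ℚ) ^ k * (bernoulli k / k.factorial)
                * (bernoulli (2 * i + 4 - k) / (2 * i + 4 - k).factorial)) : ℚ) : ℝ) := by
        rw [Rat.cast_sum, Finset.mul_sum, show 2 * i + 1 + 4 = 2 * i + 5 from rfl]
        refine Finset.sum_congr rfl fun k _ => ?_
        rw [hnegpow, Real.one_rpow, hBb, hBb,
          show 2 * i + 1 + 3 - k = 2 * i + 4 - k by omega]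
        push_cast
        ring
      rw [hsum2, hsum1, sumPQ_even i]
      rw [show -((i + 1 + 1 : ℕ) : ℤ) = -(i : ℤ) - 2 by push_cast; ring]
      ring
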